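/- Let R be a principal ideal domain and S a commutative unital R-algebra that is free of rank d ≥ 1 as an R-module. Then S admits an R-module basis of the form (1, α₁, …, α_{d−1}), i.e. a basis whose first element is the multiplicative identity of S. -/

import Mathlib

/-- If multiplication by `algebraMap R S r` is invertible on a module with a finite basis
of positive size, then `r` is a unit in `R`. -/
lemma aux_isUnit_of_algebraMap_isUnit {R S : Type*} [CommRing R] [CommRing S] [Algebra R S]
    {d : ℕ} (hd : 1 ≤ d) (b : Module.Basis (Fin d) R S) {r : R}
    (hu : IsUnit (algebraMap R S r)) : IsUnit r := by
  obtain ⟨u, hu⟩ := hu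
  let e : S ≃ₗ[R] S := LinearEquiv.ofLinear
    (LinearMap.mulLeft R (u : S)) (LinearMap.mulLeft R ((u⁻¹ : Sˣ) : S))
    (by ext x; simp [← mul_assoc])
    (by ext x; simp [← mul_assoc])
  have he : e.toLinearMap = r • (LinearMap.id : S →ₗ[R] S) := by
    apply LinearMap.ext
    intro x
    simp only [e, LinearEquiv.ofLinear_toLinearMap, LinearMap.mulLeft_apply,
      LinearMap.smul_apply, LinearMap.id_apply, hu]
    exact (Algebra.smul_def r x).symm
  have hdet : IsUnit (LinearMap.det e.toLinearMap) := e.isUnit_det'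
  rw [he] at hdet
  have : LinearMap.det (r • (LinearMap.id : S →ₗ[R] S)) = r ^ d := by
    haveI := Classical.decEq (Fin d)
    rw [← LinearMap.det_toMatrix b, map_smul, LinearMap.toMatrix_id, Matrix.det_smul,
      Matrix.det_one, Fintype.card_fin, mul_one]
  rw [this] at hdet
  exact (isUnit_pow_iff (Nat.one_le_iff_ne_zero.mp hd)).mp hdet

/-- Let `R` be a principal ideal domain and `S` a commutative unital `R`-algebra that is
free of rank `d ≥ 1` as an `R`-module.  Then `S` admits an `R`-module basis whose first
element is the multiplicative identity `1` of `S`. -/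
theorem stmt_1 (R S : Type*) [CommRing R] [IsDomain R] [IsPrincipalIdealRing R]
    [CommRing S] [Algebra R S] [Module.Free R S]
    (d : ℕ) (hd : 1 ≤ d) (hrank : Module.finrank R S = d)
    (i0 : Fin d) (hi0 : (i0 : ℕ) = 0) :
    ∃ b : Module.Basis (Fin d) R S, b i0 = 1 := by
  haveI : Module.Finite R S := Module.finite_of_finrank_pos (by omega)
  haveI : Nontrivial S := by
    by_contra h
    rw [not_nontrivial_iff_subsingleton] at h
    have := Module.finrank_zero_of_subsingleton (R := R) (M := S)
    omega
  have hone : (1 : S) ≠ 0 := one_ne_zero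
  let b : Module.Basis (Fin d) R S := (Module.finBasis R S).reindex (finCongr hrank)
  set N : Submodule R S := Submodule.span R {(1 : S)} with hN
  obtain ⟨n, snf⟩ := Submodule.smithNormalForm b N
  have h1mem : (1 : S) ∈ N := Submodule.mem_span_singleton_self 1
  -- `N` has rank 1
  have hn : n = 1 := by
    have e1 : R ≃ₗ[R] N := LinearEquiv.toSpanNonzeroSingleton R S 1 hone
    have h1 : Module.finrank R N = 1 := by
      rw [← e1.finrank_eq, Module.finrank_self]
    have h2 : Module.finrank R N = n := by
      rw [Module.finrank_eq_card_basis snf.bN, Fintype.card_fin]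
    omega
  subst hn
  obtain ⟨bM, bN, f, a, hsnf⟩ := snf
  -- express 1 in terms of the basis of N
  set x : N := ⟨1, h1mem⟩ with hx
  have hxe : x = bN.repr x 0 • bN 0 := by
    conv_lhs => rw [← bN.sum_repr x]
    simp [Fin.sum_univ_one]
  have h1eq : (1 : S) = (bN.repr x 0 * a 0) • bM (f 0) := by
    have : ((x : S)) = bN.repr x 0 • ((bN 0 : N) : S) := by
      rw [hxe]; simp
    rw [hsnf 0] at this
    simpa [mul_smul] using this
  set r : R := bN.repr x 0 * a 0 with hr
  have hru : IsUnit (algebraMap R S r) := by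
    apply IsUnit.of_mul_eq_one (bM (f 0))
    rw [← Algebra.smul_def, ← h1eq]
  have hunit : IsUnit r := aux_isUnit_of_algebraMap_isUnit hd bM hru
  obtain ⟨u, huv⟩ := hunit
  classical
  let w : Fin d → Rˣ := fun i => if i = f 0 then u else 1
  let c : Module.Basis (Fin d) R S := bM.unitsSMul w
  have hc : c (f 0) = 1 := by
    rw [show c (f 0) = w (f 0) • bM (f 0) from bM.unitsSMul_apply (f 0),
      show w (f 0) = u from if_pos rfl, Units.smul_def, huv]
    exact h1eq.symm
  refine ⟨c.reindex (Equiv.swap (f 0) i0), ?_⟩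
  rw [Module.Basis.reindex_apply, Equiv.symm_swap, Equiv.swap_apply_right, hc]
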